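/- Let f : ℕ → ℂ be an arithmetic function and let α > 0 be such that the series ∑_{n=1}^∞ |f(n)|/n^{1−α} converges. Let a be a nonzero integer. Then there is a constant C > 0 (depending only on f, a and α) such that for every real y ≥ 2, | ∑_{m > y} f(m) c_m / m | ≤ C / y^{α/2}; in particular the series c_f = ∑_{m=1}^∞ f(m) c_m / m converges absolutely. -/

import Mathlib

open Finset

/-- Real value of the Riemann zeta function at a real `s > 1`, as the series
`∑_{n=1}^∞ 1/n^s`. -/
noncomputable def zetaR (s : ℝ) : ℝ := ∑' n : ℕ, 1 / (n + 1 : ℝ) ^ s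

/-- The constant `c_m` from Felix's theorem, for a fixed nonzero integer `a`:
`(ζ(2)ζ(3)/ζ(6)) ∏_{p∣a} (1 − p/(p²−p+1)) ∏_{p∣m} (1 + (p−1)/(p²−p+1))`. -/
noncomputable def cConst (a : ℤ) (m : ℕ) : ℝ :=
  (zetaR 2 * zetaR 3 / zetaR 6) *
    (∏ p ∈ a.natAbs.primeFactors, (1 - (p : ℝ) / ((p : ℝ) ^ 2 - p + 1))) *
    ∏ p ∈ m.primeFactors, (1 + ((p : ℝ) - 1) / ((p : ℝ) ^ 2 - p + 1))

lemma one_le_g {p : ℕ} (hp : p.Prime) :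
    1 ≤ 1 + ((p : ℝ) - 1) / ((p : ℝ) ^ 2 - p + 1) := by
  have h2 : (2 : ℝ) ≤ p := by exact_mod_cast hp.two_le
  have hd : (0 : ℝ) < (p : ℝ) ^ 2 - p + 1 := by nlinarith
  have : 0 ≤ ((p : ℝ) - 1) / ((p : ℝ) ^ 2 - p + 1) :=
    div_nonneg (by linarith) hd.le
  linarith

lemma g_le_two {p : ℕ} (hp : p.Prime) :
    1 + ((p : ℝ) - 1) / ((p : ℝ) ^ 2 - p + 1) ≤ 2 := by
  have h2 : (2 : ℝ) ≤ p := by exact_mod_cast hp.two_le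
  have hd : (0 : ℝ) < (p : ℝ) ^ 2 - p + 1 := by nlinarith
  have : ((p : ℝ) - 1) / ((p : ℝ) ^ 2 - p + 1) ≤ 1 := by
    rw [div_le_one hd]; nlinarith
  linarith

lemma prod_g_le (α : ℝ) (hα : 0 < α) :
    ∃ K : ℝ, 0 < K ∧ ∀ m : ℕ, 0 < m →
      ∏ p ∈ m.primeFactors, (1 + ((p : ℝ) - 1) / ((p : ℝ) ^ 2 - p + 1)) ≤
        K * (m : ℝ) ^ (α / 2) := by
  classical
  set T : ℕ := max 2 ⌈(2 : ℝ) ^ (2 / α)⌉₊ with hT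
  refine ⟨(2 : ℝ) ^ T, by positivity, fun m hm => ?_⟩
  rw [← Finset.prod_filter_mul_prod_filter_not m.primeFactors (fun p => p < T)]
  have bound1 : ∏ p ∈ m.primeFactors.filter (fun p => p < T),
      (1 + ((p : ℝ) - 1) / ((p : ℝ) ^ 2 - p + 1)) ≤ (2 : ℝ) ^ T := by
    calc ∏ p ∈ m.primeFactors.filter (fun p => p < T),
        (1 + ((p : ℝ) - 1) / ((p : ℝ) ^ 2 - p + 1))
        ≤ ∏ _p ∈ m.primeFactors.filter (fun p => p < T), (2 : ℝ) :=
          Finset.prod_le_prod (fun p hp => le_trans zero_le_one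
            (one_le_g (Nat.prime_of_mem_primeFactors (Finset.mem_filter.1 hp).1)))
            (fun p hp =>
              g_le_two (Nat.prime_of_mem_primeFactors (Finset.mem_filter.1 hp).1))
      _ = 2 ^ (m.primeFactors.filter (fun p => p < T)).card :=
          Finset.prod_const 2
      _ ≤ (2 : ℝ) ^ T := by
          apply pow_le_pow_right₀ one_le_two
          calc (m.primeFactors.filter (fun p => p < T)).card
              ≤ (Finset.range T).card := Finset.card_le_card
                (fun p hp => Finset.mem_range.2 (Finset.mem_filter.1 hp).2)
            _ = T := Finset.card_range T
  have bound2 : ∏ p ∈ m.primeFactors.filter (fun p => ¬ p < T),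
      (1 + ((p : ℝ) - 1) / ((p : ℝ) ^ 2 - p + 1)) ≤ (m : ℝ) ^ (α / 2) := by
    have h2 : ∀ p ∈ m.primeFactors.filter (fun p => ¬ p < T),
        (1 + ((p : ℝ) - 1) / ((p : ℝ) ^ 2 - p + 1)) ≤ (p : ℝ) ^ (α / 2) := by
      intro p hp
      obtain ⟨hpm, hpT⟩ := Finset.mem_filter.1 hp
      push_neg at hpT
      have hprime := Nat.prime_of_mem_primeFactors hpm
      have h2T : (2 : ℝ) ^ (2 / α) ≤ (p : ℝ) := by
        calc (2 : ℝ) ^ (2 / α) ≤ (⌈(2 : ℝ) ^ (2 / α)⌉₊ : ℝ) := Nat.le_ceil _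
          _ ≤ (p : ℝ) := by
              exact_mod_cast le_trans (le_max_right 2 _) hpT
      have hle : (2 : ℝ) ≤ (p : ℝ) ^ (α / 2) := by
        have h := Real.rpow_le_rpow (by positivity) h2T
          (by positivity : (0 : ℝ) ≤ α / 2)
        rw [← Real.rpow_mul (by norm_num : (0 : ℝ) ≤ 2)] at h
        rwa [show 2 / α * (α / 2) = 1 by field_simp, Real.rpow_one] at h
      exact le_trans (g_le_two hprime) hle
    calc ∏ p ∈ m.primeFactors.filter (fun p => ¬ p < T),
        (1 + ((p : ℝ) - 1) / ((p : ℝ) ^ 2 - p + 1))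
        ≤ ∏ p ∈ m.primeFactors.filter (fun p => ¬ p < T), (p : ℝ) ^ (α / 2) :=
          Finset.prod_le_prod (fun p hp => le_trans zero_le_one
            (one_le_g (Nat.prime_of_mem_primeFactors (Finset.mem_filter.1 hp).1))) h2
      _ = ((∏ p ∈ m.primeFactors.filter (fun p => ¬ p < T), p : ℕ) : ℝ) ^ (α / 2) := by
          rw [Real.finset_prod_rpow _ _ (fun p _ => Nat.cast_nonneg p)]
          rw [Nat.cast_prod]
      _ ≤ (m : ℝ) ^ (α / 2) := by
          apply Real.rpow_le_rpow (by positivity) _ (by positivity)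
          have hdvd : (∏ p ∈ m.primeFactors.filter (fun p => ¬ p < T), p) ∣ m := by
            refine dvd_trans ?_ (Nat.prod_primeFactors_dvd m)
            exact Finset.prod_dvd_prod_of_subset _ _ _ (Finset.filter_subset _ _)
          exact_mod_cast Nat.le_of_dvd hm hdvd
  have hnn : (0 : ℝ) ≤ ∏ p ∈ m.primeFactors.filter (fun p => ¬ p < T),
      (1 + ((p : ℝ) - 1) / ((p : ℝ) ^ 2 - p + 1)) :=
    Finset.prod_nonneg (fun p hp => le_trans zero_le_one
      (one_le_g (Nat.prime_of_mem_primeFactors (Finset.mem_filter.1 hp).1)))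
  exact mul_le_mul bound1 bound2 hnn (by positivity)

lemma cConst_abs_le (a : ℤ) (m : ℕ) :
    |cConst a m| ≤ |zetaR 2 * zetaR 3 / zetaR 6| *
      ∏ p ∈ m.primeFactors, (1 + ((p : ℝ) - 1) / ((p : ℝ) ^ 2 - p + 1)) := by
  unfold cConst
  have hGnn : (0 : ℝ) ≤ ∏ p ∈ m.primeFactors,
      (1 + ((p : ℝ) - 1) / ((p : ℝ) ^ 2 - p + 1)) :=
    Finset.prod_nonneg (fun p hp => le_trans zero_le_one
      (one_le_g (Nat.prime_of_mem_primeFactors hp)))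
  rw [abs_mul, abs_mul, abs_of_nonneg hGnn]
  have hA : |∏ p ∈ a.natAbs.primeFactors, (1 - (p : ℝ) / ((p : ℝ) ^ 2 - p + 1))| ≤ 1 := by
    rw [Finset.abs_prod]
    apply Finset.prod_le_one (fun p _ => abs_nonneg _)
    intro p hp
    have h2 : (2 : ℝ) ≤ p := by
      exact_mod_cast (Nat.prime_of_mem_primeFactors hp).two_le
    have hd : (0 : ℝ) < (p : ℝ) ^ 2 - p + 1 := by nlinarith
    have ht1 : (p : ℝ) / ((p : ℝ) ^ 2 - p + 1) ≤ 1 := by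
      rw [div_le_one hd]; nlinarith
    have ht0 : 0 ≤ (p : ℝ) / ((p : ℝ) ^ 2 - p + 1) :=
      div_nonneg (by linarith) hd.le
    rw [abs_of_nonneg (by linarith)]; linarith
  have := mul_le_mul_of_nonneg_right
    (mul_le_mul_of_nonneg_left hA (abs_nonneg (zetaR 2 * zetaR 3 / zetaR 6))) hGnn
  simpa using this

theorem cConst_series_tail (f : ℕ → ℂ) (α : ℝ) (hα : 0 < α)
    (hf : Summable fun n : ℕ => ‖f (n + 1)‖ / (n + 1 : ℝ) ^ (1 - α))
    (a : ℤ) (ha : a ≠ 0) :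
    Summable (fun m : ℕ => ‖f (m + 1) * (cConst a (m + 1) : ℂ) / (m + 1)‖) ∧
    ∃ C : ℝ, 0 < C ∧ ∀ y : ℝ, 2 ≤ y →
      ‖∑' m : ℕ, (if y < (m + 1 : ℝ) then
          f (m + 1) * (cConst a (m + 1) : ℂ) / (m + 1) else 0)‖ ≤
      C / y ^ (α / 2) := by
  obtain ⟨K, hK, hKprod⟩ := prod_g_le α hα
  set B : ℝ := |zetaR 2 * zetaR 3 / zetaR 6| with hB
  set D : ℝ := B * K with hD
  have hDnn : 0 ≤ D := mul_nonneg (abs_nonneg _) hK.le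
  -- key termwise bound
  have key : ∀ m : ℕ, ‖f (m + 1) * (cConst a (m + 1) : ℂ) / (m + 1)‖ ≤
      D * (‖f (m + 1)‖ / ((m : ℝ) + 1) ^ (1 - α)) * (((m : ℝ) + 1) ^ (α / 2))⁻¹ := by
    intro m
    have hx : (0 : ℝ) < (m : ℝ) + 1 := by positivity
    have hnorm : ‖f (m + 1) * (cConst a (m + 1) : ℂ) / (m + 1)‖ =
        ‖f (m + 1)‖ * |cConst a (m + 1)| / ((m : ℝ) + 1) := by
      rw [norm_div, norm_mul, Complex.norm_real, Real.norm_eq_abs]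
      congr 1
      rw [show ((m : ℂ) + 1) = ((m + 1 : ℕ) : ℂ) by push_cast; ring,
        Complex.norm_natCast]
      push_cast; ring
    have hc : |cConst a (m + 1)| ≤ D * ((m : ℝ) + 1) ^ (α / 2) := by
      refine (cConst_abs_le a (m + 1)).trans ?_
      have := hKprod (m + 1) (Nat.succ_pos m)
      rw [hD, mul_assoc]
      refine mul_le_mul_of_nonneg_left ?_ (abs_nonneg _)
      push_cast at this ⊢
      exact this
    rw [hnorm]
    have h1 : ‖f (m + 1)‖ * |cConst a (m + 1)| / ((m : ℝ) + 1) ≤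
        ‖f (m + 1)‖ * (D * ((m : ℝ) + 1) ^ (α / 2)) / ((m : ℝ) + 1) := by
      gcongr
    refine h1.trans (le_of_eq ?_)
    have hring : ((m : ℝ) + 1) ^ (1 - α) * (((m : ℝ) + 1) ^ (α / 2) *
        ((m : ℝ) + 1) ^ (α / 2)) = (m : ℝ) + 1 := by
      rw [← Real.rpow_add hx, ← Real.rpow_add hx,
        show 1 - α + (α / 2 + α / 2) = 1 by ring, Real.rpow_one]
    have h1a : ((m : ℝ) + 1) ^ (1 - α) ≠ 0 := by positivity
    have h2a : ((m : ℝ) + 1) ^ (α / 2) ≠ 0 := by positivity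
    field_simp
    linear_combination (‖f (m + 1)‖ * D) * hring
  have hx1 : ∀ m : ℕ, (1 : ℝ) ≤ ((m : ℝ) + 1) ^ (α / 2) := by
    intro m
    have : ((m : ℝ) + 1) ^ (0 : ℝ) ≤ ((m : ℝ) + 1) ^ (α / 2) :=
      Real.rpow_le_rpow_of_exponent_le (by simp [Nat.cast_nonneg]) (by positivity)
    simpa using this
  have hsum : Summable (fun m : ℕ => ‖f (m + 1) * (cConst a (m + 1) : ℂ) / (m + 1)‖) := by
    refine Summable.of_nonneg_of_le (fun m => norm_nonneg _)
      (fun m => (key m).trans ?_) (hf.mul_left D)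
    have : (((m : ℝ) + 1) ^ (α / 2))⁻¹ ≤ 1 :=
      inv_le_one_of_one_le₀ (hx1 m)
    exact mul_le_of_le_one_right (by positivity) this
  refine ⟨hsum, D * (∑' m : ℕ, ‖f (m + 1)‖ / ((m : ℝ) + 1) ^ (1 - α)) + 1, ?_, ?_⟩
  · have : 0 ≤ D * (∑' m : ℕ, ‖f (m + 1)‖ / ((m : ℝ) + 1) ^ (1 - α)) :=
      mul_nonneg hDnn (tsum_nonneg (fun m => by positivity))
    linarith
  intro y hy
  have hy0 : (0 : ℝ) < y := by linarith
  have hyr : (0 : ℝ) < y ^ (α / 2) := Real.rpow_pos_of_pos hy0 _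
  -- termwise bound for the tail
  have tail_bd : ∀ m : ℕ, ‖(if y < (m + 1 : ℝ) then
      f (m + 1) * (cConst a (m + 1) : ℂ) / (m + 1) else 0)‖ ≤
      D * (‖f (m + 1)‖ / ((m : ℝ) + 1) ^ (1 - α)) * (y ^ (α / 2))⁻¹ := by
    intro m
    by_cases hcase : y < (m + 1 : ℝ)
    · rw [if_pos hcase]
      refine (key m).trans ?_
      have hyx : y ^ (α / 2) ≤ ((m : ℝ) + 1) ^ (α / 2) :=
        Real.rpow_le_rpow hy0.le (by push_cast; linarith) (by positivity)
      have hinv : (((m : ℝ) + 1) ^ (α / 2))⁻¹ ≤ (y ^ (α / 2))⁻¹ :=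
        inv_anti₀ hyr hyx
      exact mul_le_mul_of_nonneg_left hinv (by positivity)
    · rw [if_neg hcase]
      simp only [norm_zero]
      positivity
  have hbsum : Summable (fun m : ℕ =>
      D * (‖f (m + 1)‖ / ((m : ℝ) + 1) ^ (1 - α)) * (y ^ (α / 2))⁻¹) :=
    (hf.mul_left D).mul_right _
  have hitesum : Summable (fun m : ℕ => ‖(if y < (m + 1 : ℝ) then
      f (m + 1) * (cConst a (m + 1) : ℂ) / (m + 1) else 0)‖) :=
    Summable.of_nonneg_of_le (fun m => norm_nonneg _) tail_bd hbsum
  calc ‖∑' m : ℕ, (if y < (m + 1 : ℝ) then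
        f (m + 1) * (cConst a (m + 1) : ℂ) / (m + 1) else 0)‖
      ≤ ∑' m : ℕ, ‖(if y < (m + 1 : ℝ) then
        f (m + 1) * (cConst a (m + 1) : ℂ) / (m + 1) else 0)‖ :=
        norm_tsum_le_tsum_norm hitesum
    _ ≤ ∑' m : ℕ, D * (‖f (m + 1)‖ / ((m : ℝ) + 1) ^ (1 - α)) * (y ^ (α / 2))⁻¹ :=
        Summable.tsum_le_tsum tail_bd hitesum hbsum
    _ = D * (∑' m : ℕ, ‖f (m + 1)‖ / ((m : ℝ) + 1) ^ (1 - α)) * (y ^ (α / 2))⁻¹ := by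
        rw [tsum_mul_right, tsum_mul_left]
    _ ≤ (D * (∑' m : ℕ, ‖f (m + 1)‖ / ((m : ℝ) + 1) ^ (1 - α)) + 1) / y ^ (α / 2) := by
        rw [div_eq_mul_inv]
        apply mul_le_mul_of_nonneg_right _ (inv_nonneg.2 hyr.le)
        linarith
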